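/- Let H be a group, μ a symmetric probability measure on H with finite support, A a subset of H, and l₀ a positive integer. Then μ^(2l₀)(A·A) ≥ max over h ∈ H of (μ^(l₀)(hA))², provided A and μ are symmetric. -/

import Mathlib

open Finset
open scoped Pointwise Classical

/-- The mass that a finitely supported measure (an element of the monoid algebra,
whose multiplication is convolution) assigns to a set. -/
noncomputable def massOn {H : Type*} [Group H] (μ : MonoidAlgebra ℝ H) (A : Set H) : ℝ :=
  ∑ x ∈ μ.coeff.support, if x ∈ A then μ.coeff x else 0

section Aux

variable {H : Type*} [Group H]

lemma mul_apply'' (f g : MonoidAlgebra ℝ H) (x : H) :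
    (f * g).coeff x = ∑ a ∈ f.coeff.support, ∑ b ∈ g.coeff.support, if a * b = x then f.coeff a * g.coeff b else 0 := by
  rw [MonoidAlgebra.coeff_mul]; rfl

lemma mul_apply_nonneg (f g : MonoidAlgebra ℝ H) (hf : ∀ x, 0 ≤ f.coeff x) (hg : ∀ x, 0 ≤ g.coeff x) :
    ∀ x, 0 ≤ (f * g).coeff x := by
  intro x
  rw [mul_apply'']
  refine Finset.sum_nonneg fun a _ => Finset.sum_nonneg fun b _ => ?_
  split
  · exact mul_nonneg (hf a) (hg b)
  · exact le_rfl

lemma pow_apply_nonneg (μ : MonoidAlgebra ℝ H) (hpos : ∀ g : H, 0 ≤ μ.coeff g) (n : ℕ) :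
    ∀ x, 0 ≤ (μ ^ n).coeff x := by
  induction n with
  | zero =>
    intro x
    simp only [pow_zero]
    rw [MonoidAlgebra.one_def]
    classical
    rw [MonoidAlgebra.coeff_single, Finsupp.single_apply]
    split <;> norm_num
  | succ n ih =>
    rw [pow_succ]
    exact mul_apply_nonneg _ _ ih hpos

lemma conv_symm_apply (f g : MonoidAlgebra ℝ H) (hf : ∀ x, f.coeff x⁻¹ = f.coeff x)
    (hg : ∀ x, g.coeff x⁻¹ = g.coeff x) (x : H) : (f * g).coeff x⁻¹ = (g * f).coeff x := by
  classical
  rw [mul_apply'', mul_apply'']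
  rw [← Finset.sum_product', ← Finset.sum_product']
  refine Finset.sum_nbij' (fun p => (p.2⁻¹, p.1⁻¹)) (fun p => (p.2⁻¹, p.1⁻¹)) ?_ ?_ ?_ ?_ ?_
  · rintro ⟨a, b⟩ hab
    simp only [Finset.mem_product, Finsupp.mem_support_iff] at hab ⊢
    rw [hg, hf]
    exact ⟨hab.2, hab.1⟩
  · rintro ⟨a, b⟩ hab
    simp only [Finset.mem_product, Finsupp.mem_support_iff] at hab ⊢
    rw [hf, hg]
    exact ⟨hab.2, hab.1⟩
  · rintro ⟨a, b⟩ _; simp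
  · rintro ⟨a, b⟩ _; simp
  · rintro ⟨a, b⟩ _
    simp only
    rw [hg, hf]
    have hiff : a * b = x⁻¹ ↔ b⁻¹ * a⁻¹ = x := by
      constructor
      · intro hab; rw [← mul_inv_rev, hab, inv_inv]
      · intro hab; rw [← hab, mul_inv_rev, inv_inv, inv_inv]
    by_cases hc : a * b = x⁻¹
    · rw [if_pos hc, if_pos (hiff.mp hc), mul_comm]
    · rw [if_neg hc, if_neg (fun hc' => hc (hiff.mpr hc'))]

lemma pow_symm (μ : MonoidAlgebra ℝ H) (hsymm : ∀ g : H, μ.coeff g⁻¹ = μ.coeff g) (n : ℕ) :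
    ∀ x, (μ ^ n).coeff x⁻¹ = (μ ^ n).coeff x := by
  induction n with
  | zero =>
    intro x
    simp only [pow_zero]
    rw [MonoidAlgebra.one_def]
    classical
    rw [MonoidAlgebra.coeff_single, Finsupp.single_apply, Finsupp.single_apply]
    have hiff : (1 : H) = x⁻¹ ↔ (1 : H) = x := by
      constructor <;> intro h
      · rw [← inv_inv x, ← h, inv_one]
      · rw [← h, inv_one]
    by_cases hc : (1 : H) = x
    · rw [if_pos (hiff.mpr hc), if_pos hc]
    · rw [if_neg (fun h => hc (hiff.mp h)), if_neg hc]
  | succ n ih =>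
    intro x
    have h1 : μ ^ (n + 1) = μ ^ n * μ := pow_succ μ n
    rw [h1, conv_symm_apply _ _ ih hsymm x, show μ * μ ^ n = μ ^ n * μ from (pow_succ' μ n).symm.trans (pow_succ μ n)]

lemma massOn_eq_sum_subset (g : MonoidAlgebra ℝ H) (B : Set H) (F : Finset H)
    (hF : g.coeff.support ⊆ F) : massOn g B = ∑ x ∈ F, if x ∈ B then g.coeff x else 0 := by
  classical
  unfold massOn
  refine Finset.sum_subset hF fun x _ hx => ?_
  rw [Finsupp.notMem_support_iff] at hx
  simp [hx]

lemma massOn_mono (g : MonoidAlgebra ℝ H) (hg : ∀ x, 0 ≤ g.coeff x) {B C : Set H} (hBC : B ⊆ C) :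
    massOn g B ≤ massOn g C := by
  unfold massOn
  refine Finset.sum_le_sum fun x _ => ?_
  by_cases hx : x ∈ B
  · rw [if_pos hx, if_pos (hBC hx)]
  · rw [if_neg hx]
    split
    · exact hg x
    · exact le_rfl

lemma massOn_inv (g : MonoidAlgebra ℝ H) (hg : ∀ x, g.coeff x⁻¹ = g.coeff x) (B : Set H) :
    massOn g B⁻¹ = massOn g B := by
  classical
  unfold massOn
  refine Finset.sum_nbij' (fun x => x⁻¹) (fun x => x⁻¹) ?_ ?_ ?_ ?_ ?_
  · intro a ha
    simp only [Finsupp.mem_support_iff] at ha ⊢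
    rw [hg]; exact ha
  · intro a ha
    simp only [Finsupp.mem_support_iff] at ha ⊢
    rw [hg]; exact ha
  · intro a _; simp
  · intro a _; simp
  · intro a _
    rw [hg]
    have hiff : a ∈ B⁻¹ ↔ a⁻¹ ∈ B := Set.mem_inv
    by_cases hc : a ∈ B⁻¹
    · rw [if_pos hc, if_pos (hiff.mp hc)]
    · rw [if_neg hc, if_neg (fun h => hc (hiff.mpr h))]

lemma massOn_mul_massOn_le (ν : MonoidAlgebra ℝ H) (hν : ∀ x, 0 ≤ ν.coeff x) (S T : Set H) :
    massOn ν S * massOn ν T ≤ massOn (ν * ν) (S * T) := by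
  classical
  have hsupp : (ν * ν).coeff.support ⊆ ν.coeff.support * ν.coeff.support := by
    intro z hz
    rw [Finsupp.mem_support_iff, mul_apply''] at hz
    by_contra hzn
    apply hz
    refine Finset.sum_eq_zero fun a ha => Finset.sum_eq_zero fun b hb => ?_
    split
    · next hab =>
      exfalso
      exact hzn (hab ▸ Finset.mul_mem_mul ha hb)
    · rfl
  rw [massOn_eq_sum_subset (ν * ν) (S * T) (ν.coeff.support * ν.coeff.support) hsupp]
  have key : ∀ z ∈ ν.coeff.support * ν.coeff.support,
      (if z ∈ S * T then (ν * ν).coeff z else 0) =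
      ∑ a ∈ ν.coeff.support, ∑ b ∈ ν.coeff.support,
        if z ∈ S * T ∧ a * b = z then ν.coeff a * ν.coeff b else 0 := by
    intro z _
    by_cases hz : z ∈ S * T
    · rw [if_pos hz, mul_apply'']
      refine Finset.sum_congr rfl fun a _ => Finset.sum_congr rfl fun b _ => ?_
      simp [hz]
    · rw [if_neg hz]
      symm
      refine Finset.sum_eq_zero fun a _ => Finset.sum_eq_zero fun b _ => ?_
      simp [hz]
  rw [Finset.sum_congr rfl key]
  rw [Finset.sum_comm]
  unfold massOn
  rw [Finset.sum_mul_sum]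
  refine Finset.sum_le_sum fun a ha => ?_
  rw [Finset.sum_comm]
  refine Finset.sum_le_sum fun b hb => ?_
  have hab : a * b ∈ ν.coeff.support * ν.coeff.support := Finset.mul_mem_mul ha hb
  have collapse : ∑ z ∈ ν.coeff.support * ν.coeff.support,
      (if z ∈ S * T ∧ a * b = z then ν.coeff a * ν.coeff b else 0) =
      if a * b ∈ S * T then ν.coeff a * ν.coeff b else 0 := by
    rw [Finset.sum_eq_single (a * b)]
    · by_cases hc : a * b ∈ S * T
      · rw [if_pos ⟨hc, rfl⟩, if_pos hc]
      · rw [if_neg (fun h => hc h.1), if_neg hc]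
    · intro z _ hz
      rw [if_neg (fun h => hz h.2.symm)]
    · intro h; exact absurd hab h
  rw [collapse]
  by_cases hS : a ∈ S
  · by_cases hT : b ∈ T
    · rw [if_pos hS, if_pos hT, if_pos (Set.mul_mem_mul hS hT)]
    · rw [if_neg hT, mul_zero]
      split
      · exact mul_nonneg (hν a) (hν b)
      · exact le_rfl
  · rw [if_neg hS, zero_mul]
    split
    · exact mul_nonneg (hν a) (hν b)
    · exact le_rfl

end Aux

/-- For a symmetric probability measure `μ` with finite support on a group `H`
and a symmetric subset `A ⊆ H`, for any positive integer `l₀` one has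
`μ^(2l₀)(A·A) ≥ sup_{h ∈ H} (μ^(l₀)(hA))²`, i.e. the left-hand side dominates the square of the
mass of every translate. -/
theorem stmt1 {H : Type*} [Group H] (μ : MonoidAlgebra ℝ H)
    (hpos : ∀ g : H, 0 ≤ μ.coeff g)
    (hprob : ∑ x ∈ μ.coeff.support, μ.coeff x = 1)
    (hsymm : ∀ g : H, μ.coeff g⁻¹ = μ.coeff g)
    (A : Set H) (hA : A⁻¹ = A)
    (l₀ : ℕ) (hl₀ : 0 < l₀) :
    ∀ h : H, (massOn (μ ^ l₀) (h • A)) ^ 2 ≤ massOn (μ ^ (2 * l₀)) (A * A) := by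
  intro h
  set ν := μ ^ l₀ with hν
  have hνpos : ∀ x, 0 ≤ ν.coeff x := pow_apply_nonneg μ hpos l₀
  have hνsymm : ∀ x, ν.coeff x⁻¹ = ν.coeff x := pow_symm μ hsymm l₀
  have hpow : μ ^ (2 * l₀) = ν * ν := by
    rw [hν, two_mul, pow_add]
  rw [hpow]
  have hsub : (h • A)⁻¹ * (h • A) ⊆ A * A := by
    rintro x ⟨s, hs, t, ht, rfl⟩
    rw [Set.mem_inv] at hs
    obtain ⟨a, ha, hae⟩ := hs
    obtain ⟨a', ha', rfl⟩ := ht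
    simp only [smul_eq_mul] at hae
    have hs2 : s = (h * a)⁻¹ := by rw [hae, inv_inv]
    subst hs2
    have heq : (fun x1 x2 => x1 * x2) ((h * a)⁻¹) (h • a') = a⁻¹ * a' := by
      simp only [smul_eq_mul, mul_inv_rev]
      group
    rw [heq]
    have haA : a⁻¹ ∈ A := by rw [← hA]; exact Set.inv_mem_inv.mpr ha
    exact Set.mul_mem_mul haA ha'
  calc (massOn ν (h • A)) ^ 2
      = massOn ν ((h • A)⁻¹) * massOn ν (h • A) := by
        rw [massOn_inv ν hνsymm, sq]
    _ ≤ massOn (ν * ν) ((h • A)⁻¹ * (h • A)) :=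
        massOn_mul_massOn_le ν hνpos _ _
    _ ≤ massOn (ν * ν) (A * A) :=
        massOn_mono _ (mul_apply_nonneg ν ν hνpos hνpos) hsub
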